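/- Let ψ be a solution on the class of monotone games satisfying AE (average efficiency), S (symmetry), I (invariance), cParM (c-participation monotonicity) and RcParM (relative c-participation monotonicity). Let u be a monotone game, ε > 0, C₁ = {i ∈ N : c(u, i) = 1}, and let u^ε be the perturbed game defined by u^ε(S) = u(S) + ε if S ∩ C₁ ≠ ∅ and u^ε(S) = u(S) otherwise. If ψ(u^ε) = AP(u^ε), then ψ(u) = AP(u), where AP is the average participation solution. -/

import Mathlib

open Finset
open scoped Classical

/-- A monotone game on agent set `Fin n`: `u ∅ = 0` and `u` is monotone w.r.t. inclusion. -/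
def IsMonotoneGame (n : ℕ) (u : Finset (Fin n) → ℝ) : Prop :=
  u ∅ = 0 ∧ ∀ S T : Finset (Fin n), S ⊆ T → u S ≤ u T

/-- The contribution indicator: `c(u,i) = 0` if `u (S ∪ {i}) = u S` for every `S`,
and `c(u,i) = 1` otherwise. -/
noncomputable def contrib {n : ℕ} (u : Finset (Fin n) → ℝ) (i : Fin n) : ℝ :=
  if ∀ S : Finset (Fin n), u (insert i S) = u S then 0 else 1

/-- The set `C₁` of agents with contribution indicator `1`. -/
noncomputable def C1 {n : ℕ} (u : Finset (Fin n) → ℝ) : Finset (Fin n) :=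
  Finset.univ.filter fun i => contrib u i = 1

/-- The perturbed game `u^ε`: `u^ε S = u S + ε` if `S ∩ C₁ ≠ ∅`, and `u^ε S = u S`
otherwise. -/
noncomputable def perturb {n : ℕ} (u : Finset (Fin n) → ℝ) (ε : ℝ) :
    Finset (Fin n) → ℝ :=
  fun S => if (S ∩ C1 u).Nonempty then u S + ε else u S

/-- The average participation solution, with weight `w = 1 / (2 ^ n - 1)`. -/
noncomputable def AP {n : ℕ} (u : Finset (Fin n) → ℝ) (i : Fin n) : ℝ :=
  ∑ S ∈ (Finset.univ.erase i).powerset,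
    (1 / (2 ^ n - 1 : ℝ)) * (contrib u i / ((∑ j ∈ S, contrib u j) + 1)) * u (insert i S)

section Aux
variable {n : ℕ}

lemma contrib_eq_zero_or_one (u : Finset (Fin n) → ℝ) (i : Fin n) :
    contrib u i = 0 ∨ contrib u i = 1 := by
  unfold contrib; split <;> simp

lemma contrib_zero_iff (u : Finset (Fin n) → ℝ) (i : Fin n) :
    contrib u i = 0 ↔ ∀ S, u (insert i S) = u S := by
  unfold contrib; split <;> simp_all

lemma mem_C1_iff (u : Finset (Fin n) → ℝ) (i : Fin n) :
    i ∈ C1 u ↔ contrib u i = 1 := by simp [C1]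

lemma null_zero (u : Finset (Fin n) → ℝ) (hu : IsMonotoneGame n u) :
    ∀ T : Finset (Fin n), (∀ j ∈ T, contrib u j = 0) → u T = 0 := by
  intro T
  induction T using Finset.induction_on with
  | empty => intro _; exact hu.1
  | insert a s hx ih =>
    intro h
    rw [(contrib_zero_iff u a).mp (h a (mem_insert_self a s)) s]
    exact ih fun j hj => h j (mem_insert_of_mem hj)

lemma AP_zero (u : Finset (Fin n) → ℝ) (i : Fin n) (h : contrib u i = 0) :
    AP u i = 0 := by
  unfold AP
  apply Finset.sum_eq_zero
  intro S _
  rw [h]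
  simp

lemma perturb_monotone (u : Finset (Fin n) → ℝ) (hu : IsMonotoneGame n u) {ε : ℝ}
    (hε : 0 < ε) : IsMonotoneGame n (perturb u ε) := by
  constructor
  · unfold perturb; simp [hu.1]
  · intro S T hST
    have h := hu.2 S T hST
    unfold perturb
    split <;> split
    · linarith
    · rename_i h1 h2
      exact absurd (h1.mono (inter_subset_inter hST (Finset.Subset.refl _))) h2
    · linarith
    · exact h

lemma contrib_perturb (u : Finset (Fin n) → ℝ) (hu : IsMonotoneGame n u) {ε : ℝ}
    (hε : 0 < ε) (j : Fin n) : contrib (perturb u ε) j = contrib u j := by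
  rcases contrib_eq_zero_or_one u j with h | h
  · rw [h, contrib_zero_iff]
    intro S
    have hj : j ∉ C1 u := by simp [mem_C1_iff, h]
    have hins : (insert j S) ∩ C1 u = S ∩ C1 u := by
      ext x
      simp only [mem_inter, mem_insert]
      constructor
      · rintro ⟨rfl | hx, hx2⟩
        · exact absurd hx2 hj
        · exact ⟨hx, hx2⟩
      · rintro ⟨hx, hx2⟩; exact ⟨Or.inr hx, hx2⟩
    have heq := (contrib_zero_iff u j).mp h S
    unfold perturb
    rw [hins]
    split <;> simp [heq]
  · rw [h]
    unfold contrib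
    rw [if_neg]
    push_neg
    have hj : contrib u j ≠ 0 := by rw [h]; norm_num
    have hj2 : ¬ ∀ S, u (insert j S) = u S := by
      intro hall
      rw [(contrib_zero_iff u j).mpr hall] at h
      norm_num at h
    push_neg at hj2
    obtain ⟨S, hS⟩ := hj2
    by_cases hjS : j ∈ S
    · exact absurd (by rw [Finset.insert_eq_self.mpr hjS]) hS
    refine ⟨S, ?_⟩
    have hjC : j ∈ C1 u := by rw [mem_C1_iff, h]
    have h1 : ((insert j S) ∩ C1 u).Nonempty := ⟨j, by simp [hjC]⟩
    unfold perturb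
    rw [if_pos h1]
    split
    · intro hEq; apply hS; linarith
    · intro hEq
      have := hu.2 S (insert j S) (Finset.subset_insert j S)
      linarith

lemma double_sum (F : Fin n → Finset (Fin n) → ℝ) :
    ∑ i, ∑ S ∈ (Finset.univ.erase i).powerset, F i S
    = ∑ T ∈ (Finset.univ : Finset (Fin n)).powerset, ∑ i ∈ T, F i (T.erase i) := by
  have h1 : ∀ T : Finset (Fin n), ∑ i ∈ T, F i (T.erase i)
      = ∑ i : Fin n, if i ∈ T then F i (T.erase i) else 0 := by
    intro T
    rw [Finset.sum_ite_mem, Finset.univ_inter]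
  simp only [h1]
  rw [Finset.sum_comm]
  refine Finset.sum_congr rfl fun i _ => ?_
  rw [← Finset.sum_filter]
  refine Finset.sum_nbij' (fun S => insert i S) (fun T => T.erase i) ?_ ?_ ?_ ?_ ?_
  · intro S hS
    simp only [Finset.mem_filter, Finset.mem_powerset]
    exact ⟨Finset.subset_univ _, Finset.mem_insert_self i S⟩
  · intro T hT
    simp only [Finset.mem_powerset]
    exact Finset.erase_subset_erase i (Finset.subset_univ T)
  · intro S hS
    have hiS : i ∉ S := by
      simp only [Finset.mem_powerset] at hS
      intro hcon
      exact (Finset.mem_erase.mp (hS hcon)).1 rfl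
    exact Finset.erase_insert hiS
  · intro T hT
    simp only [Finset.mem_filter] at hT
    exact Finset.insert_erase hT.2
  · intro S hS
    have hiS : i ∉ S := by
      simp only [Finset.mem_powerset] at hS
      intro hcon
      exact (Finset.mem_erase.mp (hS hcon)).1 rfl
    rw [Finset.erase_insert hiS]

lemma AP_inner_sum (u : Finset (Fin n) → ℝ) (hu : IsMonotoneGame n u) (T : Finset (Fin n)) :
    ∑ i ∈ T, (contrib u i / ((∑ j ∈ T.erase i, contrib u j) + 1)) * u T = u T := by
  have hc01 := contrib_eq_zero_or_one u
  have hk : ∀ S : Finset (Fin n), ∑ j ∈ S, contrib u j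
      = ((S.filter (fun j => contrib u j = 1)).card : ℝ) := by
    intro S
    rw [← Finset.sum_filter_add_sum_filter_not S (fun j => contrib u j = 1)]
    have h2 : ∑ j ∈ S.filter (fun j => ¬ contrib u j = 1), contrib u j = 0 := by
      apply Finset.sum_eq_zero
      intro j hj
      rcases hc01 j with h | h
      · exact h
      · exact absurd h (Finset.mem_filter.mp hj).2
    have h1 : ∑ j ∈ S.filter (fun j => contrib u j = 1), contrib u j
        = ((S.filter (fun j => contrib u j = 1)).card : ℝ) := by
      rw [Finset.sum_congr rfl (fun j hj => (Finset.mem_filter.mp hj).2)]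
      simp
    rw [h1, h2, add_zero]
  set T1 := T.filter (fun j => contrib u j = 1) with hT1
  have hsplit : ∑ i ∈ T, (contrib u i / ((∑ j ∈ T.erase i, contrib u j) + 1)) * u T
      = ∑ i ∈ T1, (contrib u i / ((∑ j ∈ T.erase i, contrib u j) + 1)) * u T := by
    rw [hT1, Finset.sum_filter]
    refine Finset.sum_congr rfl fun i hi => ?_
    rcases hc01 i with h | h
    · simp [h]
    · simp [h]
  rw [hsplit]
  rcases Finset.eq_empty_or_nonempty T1 with hT1e | hT1ne
  · rw [hT1e, Finset.sum_empty]
    symm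
    apply null_zero u hu
    intro j hj
    rcases hc01 j with h | h
    · exact h
    · exact absurd (Finset.mem_filter.mpr ⟨hj, h⟩) (by rw [← hT1, hT1e]; simp)
  · have hcard : (0:ℝ) < (T1.card : ℝ) := by
      have := Finset.card_pos.mpr hT1ne
      exact_mod_cast this
    have hterm : ∀ i ∈ T1, (contrib u i / ((∑ j ∈ T.erase i, contrib u j) + 1)) * u T
        = (1 / (T1.card : ℝ)) * u T := by
      intro i hi
      have hiT : i ∈ T := (Finset.mem_filter.mp hi).1
      have hci : contrib u i = 1 := (Finset.mem_filter.mp hi).2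
      have herase : ∑ j ∈ T.erase i, contrib u j = (T1.card : ℝ) - 1 := by
        rw [hk (T.erase i)]
        rw [Finset.filter_erase]
        rw [← hT1]
        rw [Finset.cast_card_erase_of_mem hi]
      rw [herase, hci]
      ring_nf
    rw [Finset.sum_congr rfl hterm, Finset.sum_const, nsmul_eq_mul]
    field_simp

lemma AP_eff (u : Finset (Fin n) → ℝ) (hu : IsMonotoneGame n u) :
    ∑ i, AP u i
      = (1 / (2 ^ n - 1 : ℝ)) * ∑ S ∈ (Finset.univ : Finset (Fin n)).powerset, u S := by
  unfold AP
  rw [double_sum (fun i S =>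
    (1 / (2 ^ n - 1 : ℝ)) * (contrib u i / ((∑ j ∈ S, contrib u j) + 1)) * u (insert i S))]
  rw [Finset.mul_sum]
  refine Finset.sum_congr rfl fun T hT => ?_
  have h1 : ∀ i ∈ T,
      (1 / (2 ^ n - 1 : ℝ)) * (contrib u i / ((∑ j ∈ T.erase i, contrib u j) + 1))
        * u (insert i (T.erase i))
      = (1 / (2 ^ n - 1 : ℝ)) * ((contrib u i / ((∑ j ∈ T.erase i, contrib u j) + 1)) * u T) := by
    intro i hi
    rw [Finset.insert_erase hi, mul_assoc]
  rw [Finset.sum_congr rfl h1, ← Finset.mul_sum, AP_inner_sum u hu T]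

lemma Ksum (u : Finset (Fin n) → ℝ) (i k : Fin n) (hi : contrib u i = 1)
    (hk : contrib u k = 1) :
    ∑ S ∈ (Finset.univ.erase i).powerset, (1 / (2 ^ n - 1 : ℝ)) * (1 / ((∑ j ∈ S, contrib u j) + 1))
    = ∑ S ∈ (Finset.univ.erase k).powerset,
        (1 / (2 ^ n - 1 : ℝ)) * (1 / ((∑ j ∈ S, contrib u j) + 1)) := by
  set e := Equiv.swap i k with he
  have hce : ∀ j, contrib u (e j) = contrib u j := by
    intro j
    by_cases h1 : j = i
    · subst h1; rw [he]; rw [Equiv.swap_apply_left, hi, hk]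
    by_cases h2 : j = k
    · subst h2; rw [he]; rw [Equiv.swap_apply_right, hi, hk]
    · rw [he, Equiv.swap_apply_of_ne_of_ne h1 h2]
  have hmem : ∀ (a b : Fin n), ∀ S ∈ (Finset.univ.erase a).powerset,
      S.image (Equiv.swap a b) ∈ (Finset.univ.erase b).powerset := by
    intro a b S hS
    simp only [Finset.mem_powerset] at hS ⊢
    intro x hx
    simp only [Finset.mem_image] at hx
    obtain ⟨y, hy, rfl⟩ := hx
    rw [Finset.mem_erase]
    refine ⟨?_, Finset.mem_univ _⟩
    intro hcon
    have hy_ne : y ≠ a := (Finset.mem_erase.mp (hS hy)).1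
    apply hy_ne
    have : Equiv.swap a b y = Equiv.swap a b a := by rw [hcon, Equiv.swap_apply_left]
    exact (Equiv.swap a b).injective this
  have hswap : Equiv.swap k i = e := by rw [he, Equiv.swap_comm]
  have hinv : ∀ S : Finset (Fin n), (S.image e).image e = S := by
    intro S
    rw [Finset.image_image]
    have hcomp : (⇑e ∘ ⇑e) = id := funext fun x => Equiv.swap_apply_self i k x
    rw [hcomp, Finset.image_id]
  refine Finset.sum_nbij' (fun S => S.image e) (fun S => S.image e) ?_ ?_ ?_ ?_ ?_
  · exact hmem i k
  · intro S hS
    have := hmem k i S hS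
    rwa [hswap] at this
  · exact fun S _ => hinv S
  · exact fun S _ => hinv S
  · intro S _
    have hsum : ∑ x ∈ S.image e, contrib u x = ∑ j ∈ S, contrib u j := by
      rw [Finset.sum_image (fun x _ y _ h => e.injective h)]
      exact Finset.sum_congr rfl fun j _ => hce j
    rw [hsum]

lemma psi_const_diff {n : ℕ}
    (ψ : (Finset (Fin n) → ℝ) → Fin n → ℝ)
    (hRcParM : ∀ u v, IsMonotoneGame n u → IsMonotoneGame n v →
      (∀ j : Fin n, contrib u j = contrib v j) → ∀ i k : Fin n,
      contrib u i = contrib u k →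
      (∀ S : Finset (Fin n), i ∉ S → k ∉ S →
        u (insert i S) - v (insert i S) ≥ u (insert k S) - v (insert k S)) →
      ψ u i - ψ v i ≥ ψ u k - ψ v k)
    (u : Finset (Fin n) → ℝ) (hu : IsMonotoneGame n u) {ε : ℝ} (hε : 0 < ε)
    (i k : Fin n) (hci : contrib u i = 1) (hck : contrib u k = 1) :
    ψ (perturb u ε) i - ψ u i = ψ (perturb u ε) k - ψ u k := by
  have huε := perturb_monotone u hu hε
  have hc : ∀ j, contrib (perturb u ε) j = contrib u j := contrib_perturb u hu hε
  have hdiff : ∀ (a : Fin n), contrib u a = 1 → ∀ S : Finset (Fin n),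
      perturb u ε (insert a S) - u (insert a S) = ε := by
    intro a ha S
    have haC : a ∈ C1 u := (mem_C1_iff u a).mpr ha
    unfold perturb
    rw [if_pos ⟨a, Finset.mem_inter.mpr ⟨Finset.mem_insert_self a S, haC⟩⟩]
    ring
  have h1 := hRcParM (perturb u ε) u huε hu hc i k
    (by rw [hc i, hc k, hci, hck])
    (fun S _ _ => by rw [ge_iff_le, hdiff i hci S, hdiff k hck S])
  have h2 := hRcParM (perturb u ε) u huε hu hc k i
    (by rw [hc i, hc k, hci, hck])
    (fun S _ _ => by rw [ge_iff_le, hdiff i hci S, hdiff k hck S])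
  linarith

lemma AP_perturb_eq {n : ℕ} (u : Finset (Fin n) → ℝ) (hu : IsMonotoneGame n u)
    {ε : ℝ} (hε : 0 < ε) (i : Fin n) (hci : contrib u i = 1) :
    AP (perturb u ε) i
      = AP u i + ε * ∑ S ∈ (Finset.univ.erase i).powerset,
          (1 / (2 ^ n - 1 : ℝ)) * (1 / ((∑ j ∈ S, contrib u j) + 1)) := by
  have hc : ∀ j, contrib (perturb u ε) j = contrib u j := contrib_perturb u hu hε
  have hiC : i ∈ C1 u := (mem_C1_iff u i).mpr hci
  have hins : ∀ S : Finset (Fin n), perturb u ε (insert i S) = u (insert i S) + ε := by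
    intro S
    unfold perturb
    rw [if_pos ⟨i, Finset.mem_inter.mpr ⟨Finset.mem_insert_self i S, hiC⟩⟩]
  unfold AP
  simp only [hc, hins, hci]
  rw [Finset.mul_sum, ← Finset.sum_add_distrib]
  refine Finset.sum_congr rfl fun S _ => ?_
  ring

end Aux

/-- If ψ satisfies AE, S, I, cParM and RcParM, and ψ agrees with AP on the perturbed
game `u^ε`, then ψ agrees with AP on `u`. -/
theorem psi_eq_ap_of_perturb (n : ℕ) (hn : 1 ≤ n)
    (ψ : (Finset (Fin n) → ℝ) → Fin n → ℝ)
    (hAE : ∀ u, IsMonotoneGame n u →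
      ∑ i, ψ u i =
        (1 / (2 ^ n - 1 : ℝ)) * ∑ S ∈ (Finset.univ : Finset (Fin n)).powerset, u S)
    (hS : ∀ u, IsMonotoneGame n u → ∀ i j : Fin n,
      (∀ S : Finset (Fin n), i ∉ S → j ∉ S → u (insert i S) = u (insert j S)) →
      ψ u i = ψ u j)
    (hI : ∀ u, IsMonotoneGame n u → ∀ i : Fin n, contrib u i = 0 → ψ u i = 0)
    (hcParM : ∀ u v, IsMonotoneGame n u → IsMonotoneGame n v →
      (∀ j : Fin n, contrib u j = contrib v j) → ∀ i : Fin n,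
      (∀ S : Finset (Fin n), u (insert i S) ≥ v (insert i S)) → ψ u i ≥ ψ v i)
    (hRcParM : ∀ u v, IsMonotoneGame n u → IsMonotoneGame n v →
      (∀ j : Fin n, contrib u j = contrib v j) → ∀ i k : Fin n,
      contrib u i = contrib u k →
      (∀ S : Finset (Fin n), i ∉ S → k ∉ S →
        u (insert i S) - v (insert i S) ≥ u (insert k S) - v (insert k S)) →
      ψ u i - ψ v i ≥ ψ u k - ψ v k)
    (u : Finset (Fin n) → ℝ) (hu : IsMonotoneGame n u) (ε : ℝ) (hε : 0 < ε)
    (hperturb : ∀ i : Fin n, ψ (perturb u ε) i = AP (perturb u ε) i) :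
    ∀ i : Fin n, ψ u i = AP u i := by
  intro i
  rcases contrib_eq_zero_or_one u i with hci | hci
  · rw [hI u hu i hci, AP_zero u i hci]
  -- contrib u i = 1
  have hd : ∀ k : Fin n, contrib u k = 1 → ψ u k - AP u k = ψ u i - AP u i := by
    intro k hck
    have e1 := psi_const_diff ψ hRcParM u hu hε i k hci hck
    have e2 := AP_perturb_eq u hu hε i hci
    have e3 := AP_perturb_eq u hu hε k hck
    have e4 := Ksum u i k hci hck
    rw [← e4] at e3
    have h5 := hperturb i
    have h6 := hperturb k
    linarith
  -- sum of differences is zero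
  have hsum0 : ∑ j : Fin n, (ψ u j - AP u j) = 0 := by
    rw [Finset.sum_sub_distrib, hAE u hu, AP_eff u hu]
    ring
  have hrestrict : ∑ j : Fin n, (ψ u j - AP u j) = ∑ j ∈ C1 u, (ψ u j - AP u j) := by
    symm
    apply Finset.sum_subset (Finset.subset_univ _)
    intro j _ hj
    have hcj : contrib u j = 0 := by
      rcases contrib_eq_zero_or_one u j with h | h
      · exact h
      · exact absurd ((mem_C1_iff u j).mpr h) hj
    rw [hI u hu j hcj, AP_zero u j hcj]
    ring
  have hconst : ∑ j ∈ C1 u, (ψ u j - AP u j) = (C1 u).card * (ψ u i - AP u i) := by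
    rw [Finset.sum_congr rfl (fun j hj => hd j ((mem_C1_iff u j).mp hj)),
      Finset.sum_const, nsmul_eq_mul]
  have hcardpos : (0:ℝ) < (C1 u).card := by
    have : i ∈ C1 u := (mem_C1_iff u i).mpr hci
    exact_mod_cast Finset.card_pos.mpr ⟨i, this⟩
  have : ((C1 u).card : ℝ) * (ψ u i - AP u i) = 0 := by
    rw [← hconst, ← hrestrict, hsum0]
  have hzero : ψ u i - AP u i = 0 := by
    rcases mul_eq_zero.mp this with h | h
    · exact absurd h (ne_of_gt hcardpos)
    · exact h
  linarith
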